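/- Let m ≥ 2 be fixed, and let ν be a function on knot-indices satisfying the abstract inequalities: for all n, r coprime to m with n > r and for k₊ the least nonnegative integer with gcd(n−r+k₊, m)=1, |ν(n) − ν(r) − (m−1)(n − r + k₊ − 1)/2| ≤ (k₊+1)(m−1)/2; and for k₋ the greatest negative integer with gcd(n−r+k₋, m)=1 and |k₋| ≤ m−1, |ν(n) − ν(r) − (m−1)(n − r + k₋ − 1)/2| ≤ (|k₋|+1)(m−1)/2. Then h(n) := ν(n) − (m−1)n/2 satisfies −(m−1) ≤ h(n) − h(r) ≤ 0 for all such n > r. -/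

import Mathlib

private lemma gcd_shift (a b k : ℤ) (h : Int.gcd a b = 1) : Int.gcd (a + b*k) b = 1 := by
  rw [← Int.isCoprime_iff_gcd_eq_one] at *
  exact h.add_mul_left_left k

theorem stmt_7 (m : ℤ) (hm : 2 ≤ m) (ν : ℤ → ℝ)
    (h1 : ∀ n r kp : ℤ, Int.gcd n m = 1 → Int.gcd r m = 1 → r < n →
      IsLeast {k : ℤ | 0 ≤ k ∧ Int.gcd (n - r + k) m = 1} kp →
      |ν n - ν r - ((m : ℝ) - 1) * (n - r + kp - 1) / 2| ≤ ((kp : ℝ) + 1) * (m - 1) / 2)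
    (h2 : ∀ n r km : ℤ, Int.gcd n m = 1 → Int.gcd r m = 1 → r < n →
      IsGreatest {k : ℤ | k < 0 ∧ Int.gcd (n - r + k) m = 1} km → |km| ≤ m - 1 →
      |ν n - ν r - ((m : ℝ) - 1) * (n - r + km - 1) / 2| ≤ (|(km : ℝ)| + 1) * (m - 1) / 2) :
    ∀ n r : ℤ, Int.gcd n m = 1 → Int.gcd r m = 1 → r < n →
      -((m : ℝ) - 1) ≤ (ν n - ((m : ℝ) - 1) * n / 2) - (ν r - ((m : ℝ) - 1) * r / 2) ∧
        (ν n - ((m : ℝ) - 1) * n / 2) - (ν r - ((m : ℝ) - 1) * r / 2) ≤ 0 := by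
  intro n r hn hr hrn
  classical
  have hm0 : (0:ℤ) < m := by omega
  -- candidates
  have hrm : 0 < r % m := by
    rcases lt_or_eq_of_le (Int.emod_nonneg r (show m ≠ 0 by omega)) with h | h
    · exact h
    · exfalso
      have hd : m ∣ r := Int.dvd_of_emod_eq_zero h.symm
      have hr' : IsCoprime r m := Int.isCoprime_iff_gcd_eq_one.mpr hr
      have hu : IsUnit m := hr'.isUnit_of_dvd' hd dvd_rfl
      rcases Int.isUnit_iff.mp hu with h | h <;> omega
  have hrm' : r % m < m := Int.emod_lt_of_pos r hm0
  have hc1 : Int.gcd (n - r + r % m) m = 1 := by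
    have : n - r + r % m = n + m * (-(r / m)) := by
      have := Int.emod_add_mul_ediv r m
      ring_nf
      omega
    rw [this]
    exact gcd_shift n m _ hn
  have hc2 : Int.gcd (n - r + (r % m - m)) m = 1 := by
    have : n - r + (r % m - m) = n + m * (-(r / m) - 1) := by
      have := Int.emod_add_mul_ediv r m
      ring_nf
      omega
    rw [this]
    exact gcd_shift n m _ hn
  -- least element kp
  obtain ⟨kp, hkp, hkpl⟩ := Int.exists_least_of_bdd (P := fun k => 0 ≤ k ∧ Int.gcd (n - r + k) m = 1)
    ⟨0, fun z hz => hz.1⟩ ⟨r % m, le_of_lt hrm, hc1⟩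
  -- greatest element km
  obtain ⟨km, hkm, hkmg⟩ := Int.exists_greatest_of_bdd (P := fun k => k < 0 ∧ Int.gcd (n - r + k) m = 1)
    ⟨0, fun z hz => le_of_lt hz.1⟩ ⟨r % m - m, by omega, hc2⟩
  have hkmge : r % m - m ≤ km := hkmg _ ⟨by omega, hc2⟩
  have hkmabs : |km| ≤ m - 1 := by
    rw [abs_of_neg hkm.1]; omega
  have H1 := h1 n r kp hn hr hrn ⟨hkp, hkpl⟩
  have H2 := h2 n r km hn hr hrn ⟨hkm, hkmg⟩ hkmabs
  rw [abs_le] at H1 H2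
  have habs : |(km : ℝ)| = -(km : ℝ) := by
    rw [abs_of_neg]; exact_mod_cast hkm.1
  rw [habs] at H2
  have hmr : (2:ℝ) ≤ (m:ℝ) := by exact_mod_cast hm
  constructor
  · have := H1.1
    push_cast at this ⊢
    nlinarith [this]
  · have := H2.2
    push_cast at this ⊢
    nlinarith [this]
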